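/- Let G be a finite simple split graph with a fixed split partition V(G) = C ⊔ I, where C induces a clique and I is an independent set. Set m = |I| and, for each c ∈ C, set a(c) = |I ∖ N_G(c)|, where N_G(c) is the set of neighbors of c in G. Then the independence polynomial of G satisfies P_G(x) = (1+x)^m + x · ∑_{c ∈ C} (1+x)^{a(c)}. -/
import Mathlib


attribute [local instance] Classical.propDecidable

/-- `s` is an independent set of vertices of `G`. -/
def IsIndep {V : Type*} (G : SimpleGraph V) (s : Finset V) : Prop :=
  ∀ v ∈ s, ∀ w ∈ s, ¬ G.Adj v w

/-- The independence polynomial `P_G(x) = ∑ g_i x^i`. -/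
noncomputable def indepPoly {V : Type*} [Fintype V] (G : SimpleGraph V) : Polynomial ℤ :=
  ∑ s ∈ Finset.univ.filter (fun s : Finset V => IsIndep G s), Polynomial.X ^ s.card

lemma sum_powerset_pow {V : Type*} (P : Finset V) :
    ∑ t ∈ P.powerset, (Polynomial.X : Polynomial ℤ) ^ t.card
      = (1 + Polynomial.X) ^ P.card := by
  classical
  have h := Finset.prod_add (fun _ : V => (Polynomial.X : Polynomial ℤ)) (fun _ => 1) P
  simp only [Finset.prod_const, Finset.prod_const_one, one_pow, mul_one] at h
  rw [add_comm]
  exact h.symm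

/-- For a split graph `G` with split partition `V = Cl ⊔ Ind` (clique `Cl`, independent
set `Ind`), `P_G(x) = (1+x)^m + x ∑_{c ∈ Cl} (1+x)^{a(c)}` where `m = |Ind|` and
`a(c) = |Ind ∖ N_G(c)|`. -/
theorem indepPoly_split {V : Type*} [Fintype V] (G : SimpleGraph V)
    (Cl Ind : Finset V) (hdisj : Disjoint Cl Ind) (hunion : Cl ∪ Ind = Finset.univ)
    (hclique : G.IsClique (Cl : Set V)) (hindep : IsIndep G Ind) :
    indepPoly G
      = (1 + Polynomial.X) ^ Ind.card
        + Polynomial.X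
            * ∑ c ∈ Cl, (1 + Polynomial.X) ^ ((Ind.filter (fun w => ¬ G.Adj c w)).card) := by
  classical
  have hCnotI : ∀ c ∈ Cl, c ∉ Ind := fun c hc hcI =>
    (Finset.disjoint_left.mp hdisj) hc hcI
  -- decomposition of the set of independent sets
  have hsplit : Finset.univ.filter (fun s : Finset V => IsIndep G s)
      = Ind.powerset ∪
        Cl.biUnion (fun c =>
          (Ind.filter (fun w => ¬ G.Adj c w)).powerset.image (insert c)) := by
    ext s
    simp only [Finset.mem_filter, Finset.mem_univ, true_and, Finset.mem_union,
      Finset.mem_powerset, Finset.mem_biUnion, Finset.mem_image]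
    constructor
    · intro hs
      by_cases hCl : (s ∩ Cl).Nonempty
      · right
        obtain ⟨c, hc⟩ := hCl
        have hcs : c ∈ s := (Finset.mem_inter.mp hc).1
        have hcC : c ∈ Cl := (Finset.mem_inter.mp hc).2
        refine ⟨c, hcC, s.erase c, ?_, ?_⟩
        · intro w hw
          have hws : w ∈ s := Finset.mem_of_mem_erase hw
          have hwc : w ≠ c := Finset.ne_of_mem_erase hw
          have hwI : w ∈ Ind := by
            by_contra hwI
            have hwC : w ∈ Cl := by
              have := Finset.mem_univ w
              rw [← hunion, Finset.mem_union] at this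
              tauto
            exact hs w hws c hcs (hclique hwC hcC hwc)
          exact Finset.mem_filter.mpr ⟨hwI, hs c hcs w hws⟩
        · exact Finset.insert_erase hcs
      · left
        intro v hv
        have hvC : v ∉ Cl := fun h => hCl ⟨v, Finset.mem_inter.mpr ⟨hv, h⟩⟩
        have := Finset.mem_univ v
        rw [← hunion, Finset.mem_union] at this
        tauto
    · rintro (hsub | ⟨c, hcC, t, ht, rfl⟩)
      · exact fun v hv w hw => hindep v (hsub hv) w (hsub hw)
      · intro v hv w hw
        rcases Finset.mem_insert.mp hv with rfl | hvt
        · rcases Finset.mem_insert.mp hw with rfl | hwt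
          · exact G.irrefl
          · exact (Finset.mem_filter.mp (ht hwt)).2
        · rcases Finset.mem_insert.mp hw with rfl | hwt
          · exact fun h => (Finset.mem_filter.mp (ht hvt)).2 h.symm
          · exact hindep v (Finset.mem_filter.mp (ht hvt)).1 w
              (Finset.mem_filter.mp (ht hwt)).1
  have hcnott : ∀ c ∈ Cl, ∀ t ∈ (Ind.filter (fun w => ¬ G.Adj c w)).powerset, c ∉ t := by
    intro c hc t ht hct
    exact hCnotI c hc (Finset.mem_filter.mp (Finset.mem_powerset.mp ht hct)).1
  -- disjointness of the two parts
  have hdisj2 : Disjoint Ind.powerset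
      (Cl.biUnion (fun c =>
        (Ind.filter (fun w => ¬ G.Adj c w)).powerset.image (insert c))) := by
    rw [Finset.disjoint_left]
    intro s hs hs2
    obtain ⟨c, hcC, t, ht, rfl⟩ := by
      simpa only [Finset.mem_biUnion, Finset.mem_image] using hs2
    exact hCnotI c hcC (Finset.mem_powerset.mp hs (Finset.mem_insert_self c t))
  unfold indepPoly
  rw [hsplit, Finset.sum_union hdisj2, sum_powerset_pow]
  congr 1
  rw [Finset.sum_biUnion, Finset.mul_sum]
  · refine Finset.sum_congr rfl fun c hc => ?_
    rw [Finset.sum_image, ← sum_powerset_pow, Finset.mul_sum]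
    · refine Finset.sum_congr rfl fun t ht => ?_
      rw [Finset.card_insert_of_notMem (hcnott c hc t ht), pow_succ, mul_comm]
    · intro t ht t' ht' hins
      have h1 : t = (insert c t).erase c := (Finset.erase_insert (hcnott c hc t ht)).symm
      rw [h1, hins, Finset.erase_insert (hcnott c hc t' ht')]
  · intro c hc c' hc' hne
    rw [Function.onFun, Finset.disjoint_left]
    intro s hs hs'
    obtain ⟨t, ht, rfl⟩ := Finset.mem_image.mp hs
    obtain ⟨t', ht', heq⟩ := Finset.mem_image.mp hs'
    have : c ∈ insert c' t' := by rw [heq]; exact Finset.mem_insert_self c t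
    rcases Finset.mem_insert.mp this with rfl | hct'
    · exact hne rfl
    · exact hCnotI c hc (Finset.mem_filter.mp (Finset.mem_powerset.mp ht' hct')).1
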